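/- Let S ⊆ ℝ be a nonempty closed set that is bounded below, let λ ∈ ℂ with |arg(1 + λ)| < π/4, and let μ ∈ ℂ. Assume that for no τ ∈ ℝ and no s ∈ S one has μ = s + (1 + λ)^{−2}·τ². Then inf{ |μ − (1 + λ)^{−2}·τ² − s| : τ ∈ ℝ, s ∈ S } > 0. -/

import Mathlib

open Real Complex

theorem distance_to_spectral_curve (S : Set ℝ) (hS : S.Nonempty) (hScl : IsClosed S)
    (hSbd : BddBelow S)
    (lam : ℂ) (hlam : |Complex.arg (1 + lam)| < Real.pi / 4)
    (μ : ℂ) (hμ : ¬∃ τ : ℝ, ∃ s ∈ S, μ = (s : ℂ) + ((1 + lam) ^ 2)⁻¹ * (τ : ℂ) ^ 2) :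
    0 < sInf {r : ℝ | ∃ τ : ℝ, ∃ s ∈ S,
      r = ‖μ - ((1 + lam) ^ 2)⁻¹ * (τ : ℂ) ^ 2 - (s : ℂ)‖} := by
  set c : ℂ := ((1 + lam) ^ 2)⁻¹ with hcdef
  set T : Set ℝ := {r : ℝ | ∃ τ : ℝ, ∃ s ∈ S,
      r = ‖μ - c * (τ : ℂ) ^ 2 - (s : ℂ)‖} with hTdef
  obtain ⟨s₀, hs₀⟩ := hS
  have hTne : T.Nonempty := ⟨_, 0, s₀, hs₀, rfl⟩
  have hT0 : ∀ r ∈ T, (0:ℝ) ≤ r := by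
    rintro r ⟨τ, s, hs, rfl⟩; exact norm_nonneg _
  have hπ : 0 < Real.pi := Real.pi_pos
  -- real part of c is nonnegative, and positive unless c = 0
  have hcre : c = 0 ∨ 0 < c.re := by
    by_cases h1 : (1 : ℂ) + lam = 0
    · left; simp [hcdef, h1]
    · right
      have hzre : 0 < (1 + lam).re := by
        have h2 : |Complex.arg (1 + lam)| < Real.pi / 2 := by linarith
        rcases Complex.abs_arg_lt_pi_div_two_iff.mp h2 with h | h
        · exact h
        · exact absurd h h1
      have htan : Real.tan |Complex.arg (1 + lam)| < 1 := by
        rcases eq_or_ne (Complex.arg (1 + lam)) 0 with h0 | h0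
        · simp [h0]
        · calc Real.tan |Complex.arg (1 + lam)| < Real.tan (Real.pi / 4) := by
                apply Real.tan_lt_tan_of_nonneg_of_lt_pi_div_two (abs_nonneg _)
                · linarith
                · exact hlam
            _ = 1 := Real.tan_pi_div_four
      have habs : |Real.tan (Complex.arg (1 + lam))| = Real.tan |Complex.arg (1 + lam)| := by
        rcases le_or_gt 0 (Complex.arg (1 + lam)) with h | h
        · rw [_root_.abs_of_nonneg h, _root_.abs_of_nonneg]
          apply Real.tan_nonneg_of_nonneg_of_le_pi_div_two h
          have := le_abs_self (Complex.arg (1 + lam))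
          linarith
        · have hnp : Real.tan (Complex.arg (1 + lam)) ≤ 0 := by
            apply Real.tan_nonpos_of_nonpos_of_neg_pi_div_two_le h.le
            have := neg_abs_le (Complex.arg (1 + lam))
            linarith
          rw [_root_.abs_of_neg h, Real.tan_neg, _root_.abs_of_nonpos hnp]
      have htan2 : |(1 + lam).im / (1 + lam).re| < 1 := by
        rw [← Complex.tan_arg, habs]; exact htan
      have hdiv : |(1 + lam).im| / (1 + lam).re < 1 := by
        rwa [abs_div, abs_of_pos hzre] at htan2
      have him : |(1 + lam).im| < (1 + lam).re := (div_lt_one hzre).mp hdiv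
      have hwre : 0 < (((1 : ℂ) + lam) ^ 2).re := by
        have hsq : (((1 : ℂ) + lam) ^ 2).re
            = (1 + lam).re * (1 + lam).re - (1 + lam).im * (1 + lam).im := by
          rw [sq, Complex.mul_re]
        rw [hsq]
        nlinarith [abs_nonneg ((1 + lam).im), _root_.sq_abs ((1 + lam).im)]
      rw [hcdef, Complex.inv_re]
      exact div_pos hwre (Complex.normSq_pos.mpr (pow_ne_zero _ h1))
  have hcre0 : 0 ≤ c.re := by
    rcases hcre with h | h
    · simp [h]
    · exact h.le
  by_contra hcon
  push_neg at hcon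
  have hInf : sInf T = 0 := le_antisymm hcon (le_csInf hTne hT0)
  -- choose approximating sequences
  have hex : ∀ n : ℕ, ∃ p : ℝ × ℝ, p.2 ∈ S ∧
      ‖μ - c * (p.1 : ℂ) ^ 2 - (p.2 : ℂ)‖ < 1 / (n + 1) := by
    intro n
    have hlt : sInf T < 1 / ((n : ℝ) + 1) := by rw [hInf]; positivity
    obtain ⟨r, hrT, hrlt⟩ := exists_lt_of_csInf_lt hTne hlt
    obtain ⟨τ, s, hs, rfl⟩ := hrT
    exact ⟨(τ, s), hs, hrlt⟩
  choose q hqS hqlt using hex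
  set t : ℕ → ℝ := fun n => if c = 0 then 0 else (q n).1 with htdef
  have hqlt' : ∀ n, ‖μ - c * (t n : ℂ) ^ 2 - ((q n).2 : ℂ)‖ < 1 / (n + 1) := by
    intro n
    by_cases h0 : c = 0
    · have := hqlt n; simp only [h0, zero_mul] at this ⊢; exact this
    · simpa [htdef, h0] using hqlt n
  -- real part estimate
  have hreach : ∀ n, |μ.re - (c.re * (t n) ^ 2 + (q n).2)| < 1 / (n + 1) := by
    intro n
    have h2 : (μ - c * (t n : ℂ) ^ 2 - ((q n).2 : ℂ))
        = μ - c * (((t n) ^ 2 : ℝ) : ℂ) - ((q n).2 : ℂ) := by push_cast; ring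
    have h1 : (μ - c * (t n : ℂ) ^ 2 - ((q n).2 : ℂ)).re
        = μ.re - (c.re * (t n) ^ 2 + (q n).2) := by
      rw [h2, Complex.sub_re, Complex.sub_re, Complex.mul_re,
        Complex.ofReal_re, Complex.ofReal_im]
      simp only [Complex.ofReal_re]
      ring
    calc |μ.re - (c.re * (t n) ^ 2 + (q n).2)|
        = |(μ - c * (t n : ℂ) ^ 2 - ((q n).2 : ℂ)).re| := by rw [h1]
      _ ≤ ‖μ - c * (t n : ℂ) ^ 2 - ((q n).2 : ℂ)‖ := Complex.abs_re_le_norm _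
      _ < 1 / (n + 1) := hqlt' n
  obtain ⟨m, hm⟩ := hSbd
  have hone : ∀ n : ℕ, 1 / ((n : ℝ) + 1) ≤ 1 := by
    intro n
    rw [div_le_one (by positivity)]
    simp
  have hub : ∀ n, c.re * (t n) ^ 2 + (q n).2 ≤ μ.re + 1 := by
    intro n
    have h1 := (abs_lt.mp (hreach n)).1
    have h2 := hone n
    linarith
  have hsS : ∀ n, m ≤ (q n).2 := fun n => hm (hqS n)
  -- boundedness of t
  have htbd : ∃ R : ℝ, ∀ n, t n ∈ Set.Icc (-R) R := by
    rcases hcre with h0 | hpos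
    · exact ⟨0, fun n => by simp [htdef, h0]⟩
    · refine ⟨Real.sqrt ((μ.re + 1 - m) / c.re), fun n => ?_⟩
      rw [Set.mem_Icc, ← abs_le]
      apply Real.abs_le_sqrt
      rw [le_div_iff₀ hpos, mul_comm]
      have h1 := hub n
      have h2 := hsS n
      linarith
  have hsbd : ∀ n, (q n).2 ∈ Set.Icc m (μ.re + 1) := by
    intro n
    refine ⟨hsS n, ?_⟩
    have h1 := hub n
    have h2 : 0 ≤ c.re * (t n) ^ 2 := by positivity
    linarith
  obtain ⟨R, hR⟩ := htbd
  obtain ⟨tauL, -, φ, hφmono, hφlim⟩ :=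
    tendsto_subseq_of_bounded (Metric.isBounded_Icc (-R) R) hR
  obtain ⟨sL, -, ψ, hψmono, hψlim⟩ :=
    tendsto_subseq_of_bounded (Metric.isBounded_Icc m (μ.re + 1))
      (fun n => hsbd (φ n))
  have hsLS : sL ∈ S :=
    hScl.mem_of_tendsto hψlim (Filter.Eventually.of_forall fun n => hqS _)
  have hτlim : Filter.Tendsto (fun n => t (φ (ψ n))) Filter.atTop (nhds tauL) :=
    hφlim.comp hψmono.tendsto_atTop
  have hlim1 : Filter.Tendsto
      (fun n => c * ((t (φ (ψ n)) : ℂ)) ^ 2 + (((q (φ (ψ n))).2 : ℂ)))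
      Filter.atTop (nhds (c * (tauL : ℂ) ^ 2 + (sL : ℂ))) := by
    apply Filter.Tendsto.add
    · exact Filter.Tendsto.const_mul _
        (((Complex.continuous_ofReal.tendsto tauL).comp hτlim).pow 2)
    · exact (Complex.continuous_ofReal.tendsto sL).comp hψlim
  have hlim2 : Filter.Tendsto
      (fun n => c * ((t (φ (ψ n)) : ℂ)) ^ 2 + (((q (φ (ψ n))).2 : ℂ)))
      Filter.atTop (nhds μ) := by
    rw [tendsto_iff_dist_tendsto_zero]
    have hkey : ∀ k : ℕ, dist (c * ((t k : ℂ)) ^ 2 + (((q k).2 : ℂ))) μ < 1 / (k + 1) := by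
      intro k
      rw [Complex.dist_eq]
      have heq : c * ((t k : ℂ)) ^ 2 + (((q k).2 : ℂ)) - μ
          = -(μ - c * (t k : ℂ) ^ 2 - ((q k).2 : ℂ)) := by ring
      rw [heq, norm_neg]
      exact hqlt' k
    apply squeeze_zero (fun n => dist_nonneg) (fun n => (hkey (φ (ψ n))).le)
    exact tendsto_one_div_add_atTop_nhds_zero_nat.comp
      (hφmono.tendsto_atTop.comp hψmono.tendsto_atTop)
  have heq : μ = c * (tauL : ℂ) ^ 2 + (sL : ℂ) := tendsto_nhds_unique hlim2 hlim1
  exact hμ ⟨tauL, sL, hsLS, by rw [heq]; ring⟩
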